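/- Let Y_1,...,Y_n be i.i.d. with P(Y = j) = p_j for 0 ≤ j ≤ b-1. Then the probability that the descent set of (Y_1,...,Y_n) is contained in S = {s_1 < ... < s_k} equals h_{s_1}·h_{s_2-s_1}···h_{n-s_k}, where h_m = h_m(p_0,...,p_{b-1}) is the complete homogeneous symmetric polynomial of degree m evaluated at (p_0,...,p_{b-1}); consequently the probability that the descent set equals S is det(h_{s_{j+1}-s_i})_{i,j=0}^k with s_0=0, s_{k+1}=n and h_m=0 for m<0. Moreover the probability of i consecutive descents, P(Y_1 > Y_2 > ... > Y_{i+1}), equals e_{i+1}(p_0,...,p_{b-1}), the elementary symmetric polynomial. -/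

import Mathlib

/-- The complete homogeneous symmetric polynomial `h_m(p_0, …, p_{b-1})`, as a sum over
weakly increasing index sequences. -/
noncomputable def hpoly (b : ℕ) (p : Fin b → ℝ) (m : ℕ) : ℝ :=
  ∑ f ∈ Finset.univ.filter (fun f : Fin m → Fin b => ∀ i j : Fin m, i ≤ j → f i ≤ f j),
    ∏ i, p (f i)

/-- The elementary symmetric polynomial `e_r(p_0, …, p_{b-1})`. -/
noncomputable def epoly (b : ℕ) (p : Fin b → ℝ) (r : ℕ) : ℝ :=
  ∑ T ∈ Finset.powersetCard r (Finset.univ : Finset (Fin b)), ∏ i ∈ T, p i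

namespace DTA
open Finset

variable {b : ℕ} (p : Fin b → ℝ)

open Classical in
noncomputable def wsum (n : ℕ) (P : (Fin n → Fin b) → Prop) : ℝ :=
  ∑ y ∈ Finset.univ.filter P, ∏ i, p (y i)

lemma wsum_def (n : ℕ) (P : (Fin n → Fin b) → Prop) [DecidablePred P] :
    wsum p n P = ∑ y ∈ Finset.univ.filter P, ∏ i, p (y i) := by
  unfold wsum
  exact Finset.sum_congr (Finset.filter_congr_decidable _ _ _) (fun _ _ => rfl)

lemma wsum_congr {n : ℕ} {P Q : (Fin n → Fin b) → Prop} (h : ∀ y, P y ↔ Q y) :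
    wsum p n P = wsum p n Q := by
  classical
  rw [wsum_def, wsum_def]
  exact Finset.sum_congr (Finset.filter_congr (fun y _ => h y)) (fun _ _ => rfl)

lemma wsum_or {n : ℕ} {P Q : (Fin n → Fin b) → Prop} (hd : ∀ y, P y → Q y → False) :
    wsum p n (fun y => P y ∨ Q y) = wsum p n P + wsum p n Q := by
  classical
  rw [wsum_def, wsum_def, wsum_def, Finset.filter_or]
  refine Finset.sum_union ?_
  rw [Finset.disjoint_left]
  intro y hy1 hy2
  rw [Finset.mem_filter] at hy1 hy2
  exact hd y hy1.2 hy2.2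

lemma sum_prod_eq_one (hp1 : ∑ i, p i = 1) (n : ℕ) :
    ∑ y : Fin n → Fin b, ∏ i, p (y i) = 1 := by
  induction n with
  | zero => simp
  | succ m ih =>
    rw [← Equiv.sum_comp (Fin.consEquiv (fun _ : Fin (m + 1) => Fin b)) (fun y => ∏ i, p (y i)),
      Fintype.sum_prod_type]
    have h1 : ∀ (a : Fin b) (z : Fin m → Fin b),
        ∏ i, p (((Fin.consEquiv (fun _ : Fin (m + 1) => Fin b)) (a, z)) i) = p a * ∏ i, p (z i) := by
      intro a z
      rw [Fin.prod_univ_succ]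
      simp [Fin.consEquiv]
    simp only [h1]
    rw [← Finset.sum_mul_sum, hp1, ih, one_mul]

lemma wsum_true (hp1 : ∑ i, p i = 1) (n : ℕ) : wsum p n (fun _ => True) = 1 := by
  classical
  rw [wsum_def, Finset.filter_true]
  exact sum_prod_eq_one p hp1 n

lemma wsum_split (t u : ℕ) (A : (Fin t → Fin b) → Prop) (B : (Fin u → Fin b) → Prop) :
    wsum p (t + u) (fun y => A (fun i => y (Fin.castAdd u i)) ∧ B (fun i => y (Fin.natAdd t i)))
      = wsum p t A * wsum p u B := by
  classical
  rw [wsum_def, wsum_def, wsum_def, Finset.sum_filter, Finset.sum_filter, Finset.sum_filter,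
    Finset.sum_mul_sum]
  set e : ((Fin t → Fin b) × (Fin u → Fin b)) ≃ (Fin (t + u) → Fin b) :=
    (Equiv.sumArrowEquivProdArrow (Fin t) (Fin u) (Fin b)).symm.trans
      (Equiv.arrowCongr finSumFinEquiv (Equiv.refl (Fin b))) with he
  rw [← Equiv.sum_comp e, Fintype.sum_prod_type]
  refine Finset.sum_congr rfl fun w _ => Finset.sum_congr rfl fun z _ => ?_
  have hfront : (fun i => (e (w, z)) (Fin.castAdd u i)) = w := by
    funext i
    simp [he, Equiv.sumArrowEquivProdArrow, Equiv.arrowCongr]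
  have hback : (fun i => (e (w, z)) (Fin.natAdd t i)) = z := by
    funext i
    simp [he, Equiv.sumArrowEquivProdArrow, Equiv.arrowCongr]
  have hprod : ∏ i, p ((e (w, z)) i) = (∏ i, p (w i)) * ∏ i, p (z i) := by
    rw [Fin.prod_univ_add]
    exact congrArg₂ (· * ·)
      (Finset.prod_congr rfl fun i _ => congrArg p (congrFun hfront i))
      (Finset.prod_congr rfl fun i _ => congrArg p (congrFun hback i))
  rw [hfront, hback]
  by_cases hA : A w <;> by_cases hB : B z <;> simp [hA, hB, hprod]

def DesLe (n : ℕ) {b : ℕ} (P : ℕ → Prop) (y : Fin n → Fin b) : Prop :=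
  ∀ i : ℕ, ∀ h : i + 1 < n, y ⟨i + 1, h⟩ < y ⟨i, Nat.lt_of_succ_lt h⟩ → P (i + 1)

def DesGe (n : ℕ) {b : ℕ} (P : ℕ → Prop) (y : Fin n → Fin b) : Prop :=
  ∀ i : ℕ, ∀ h : i + 1 < n, P (i + 1) → y ⟨i + 1, h⟩ < y ⟨i, Nat.lt_of_succ_lt h⟩

def DesEq (n : ℕ) {b : ℕ} (P : ℕ → Prop) (y : Fin n → Fin b) : Prop :=
  ∀ i : ℕ, ∀ h : i + 1 < n, (y ⟨i + 1, h⟩ < y ⟨i, Nat.lt_of_succ_lt h⟩ ↔ P (i + 1))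

lemma desEq_iff {n : ℕ} {P : ℕ → Prop} {y : Fin n → Fin b} :
    DesEq n P y ↔ DesLe n P y ∧ DesGe n P y := by
  constructor
  · intro H; exact ⟨fun i h hd => (H i h).1 hd, fun i h hp => (H i h).2 hp⟩
  · rintro ⟨H1, H2⟩ i h; exact ⟨H1 i h, H2 i h⟩

lemma desLe_congr {n : ℕ} {P Q : ℕ → Prop} {y : Fin n → Fin b}
    (h : ∀ j, 1 ≤ j → j < n → (P j ↔ Q j)) : DesLe n P y ↔ DesLe n Q y := by
  constructor <;> intro H i hi hd
  · exact (h (i + 1) (by omega) (by omega)).1 (H i hi hd)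
  · exact (h (i + 1) (by omega) (by omega)).2 (H i hi hd)

lemma desEq_congr {n : ℕ} {P Q : ℕ → Prop} {y : Fin n → Fin b}
    (h : ∀ j, 1 ≤ j → j < n → (P j ↔ Q j)) : DesEq n P y ↔ DesEq n Q y := by
  constructor <;> intro H i hi
  · exact (H i hi).trans (h (i + 1) (by omega) (by omega))
  · exact (H i hi).trans (h (i + 1) (by omega) (by omega)).symm

lemma monotone_iff_adj {n : ℕ} (y : Fin n → Fin b) :
    Monotone y ↔ ∀ i : ℕ, ∀ h : i + 1 < n, y ⟨i, Nat.lt_of_succ_lt h⟩ ≤ y ⟨i + 1, h⟩ := by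
  match n with
  | 0 => exact ⟨fun _ i h => by omega, fun _ a => a.elim0⟩
  | m + 1 =>
    rw [Fin.monotone_iff_le_succ]
    constructor
    · intro H i h
      exact H ⟨i, by omega⟩
    · intro H i
      exact H i.val (by omega)

lemma strictAnti_iff_adj {n : ℕ} (y : Fin n → Fin b) :
    StrictAnti y ↔ ∀ i : ℕ, ∀ h : i + 1 < n, y ⟨i + 1, h⟩ < y ⟨i, Nat.lt_of_succ_lt h⟩ := by
  match n with
  | 0 => exact ⟨fun _ i h => by omega, fun _ a => a.elim0⟩
  | m + 1 =>
    rw [Fin.strictAnti_iff_succ_lt]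
    constructor
    · intro H i h
      exact H ⟨i, by omega⟩
    · intro H i
      exact H i.val (by omega)

lemma desLe_false {n : ℕ} (y : Fin n → Fin b) :
    DesLe n (fun _ => False) y ↔ Monotone y := by
  rw [monotone_iff_adj]
  constructor
  · intro H i h
    exact le_of_not_gt (fun hd => H i h hd)
  · intro H i h hd
    exact absurd hd (not_lt.2 (H i h))

lemma desGe_false {n : ℕ} (y : Fin n → Fin b) : DesGe n (fun _ => False) y :=
  fun _ _ hp => hp.elim

lemma desLe_split (t u : ℕ) (P : ℕ → Prop)
    (hP : ∀ j, 1 ≤ j → j < t → ¬ P j) (hPt : P t) (y : Fin (t + u) → Fin b) :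
    DesLe (t + u) P y ↔
      Monotone (fun i => y (Fin.castAdd u i)) ∧
        DesLe u (fun j => P (j + t)) (fun i => y (Fin.natAdd t i)) := by
  constructor
  · intro H
    refine ⟨?_, ?_⟩
    · rw [monotone_iff_adj]
      intro i h
      refine le_of_not_gt fun hd => ?_
      have hd' : y ⟨i + 1, by omega⟩ < y ⟨i, by omega⟩ := hd
      exact hP (i + 1) (by omega) h (H i (by omega) hd')
    · intro j h hd
      have hd' : y ⟨t + j + 1, by omega⟩ < y ⟨t + j, by omega⟩ := hd
      have h2 := H (t + j) (by omega) hd'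
      have heq : t + j + 1 = j + 1 + t := by omega
      rw [heq] at h2; exact h2
  · rintro ⟨Hm, Ht⟩ i h hd
    rcases lt_trichotomy (i + 1) t with h1 | h1 | h1
    · rw [monotone_iff_adj] at Hm
      have h2 : y ⟨i, by omega⟩ ≤ y ⟨i + 1, by omega⟩ := Hm i h1
      exact absurd hd (not_lt.2 h2)
    · rw [h1]; exact hPt
    · have hj : (i - t) + 1 < u := by omega
      have h2 : P (i - t + 1 + t) := Ht (i - t) hj ?_
      · rw [show (i - t) + 1 + t = i + 1 from by omega] at h2; exact h2
      · show y (Fin.natAdd t ⟨i - t + 1, hj⟩) < y (Fin.natAdd t ⟨i - t, by omega⟩)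
        have e1 : (Fin.natAdd t ⟨i - t + 1, hj⟩ : Fin (t + u)) = ⟨i + 1, h⟩ := by
          ext; simp [Fin.natAdd]; omega
        have e2 : (Fin.natAdd t ⟨i - t, by omega⟩ : Fin (t + u)) = ⟨i, by omega⟩ := by
          ext; simp [Fin.natAdd]; omega
        rw [e1, e2]; exact hd

lemma desHalf_split (t u : ℕ) (P : ℕ → Prop)
    (hP : ∀ j, 1 ≤ j → j < t → ¬ P j) (hPt : P t) (y : Fin (t + u) → Fin b) :
    (DesLe (t + u) P y ∧ DesGe (t + u) (fun j => P j ∧ j ≠ t) y) ↔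
      Monotone (fun i => y (Fin.castAdd u i)) ∧
        DesEq u (fun j => P (j + t)) (fun i => y (Fin.natAdd t i)) := by
  rw [desLe_split t u P hP hPt y, desEq_iff]
  constructor
  · rintro ⟨⟨Hm, Hle⟩, Hge⟩
    refine ⟨Hm, Hle, ?_⟩
    intro j h hp
    have h2 := Hge (t + j) (by omega) ⟨by rw [show t + j + 1 = j + 1 + t from by omega]; exact hp, by omega⟩
    exact h2
  · rintro ⟨Hm, Hle, Hge⟩
    refine ⟨⟨Hm, Hle⟩, ?_⟩
    rintro i h ⟨hp, hne⟩
    rcases lt_trichotomy (i + 1) t with h1 | h1 | h1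
    · exact absurd hp (hP (i + 1) (by omega) h1)
    · exact absurd h1 hne
    · have hj : (i - t) + 1 < u := by
        omega
      have h2 := Hge (i - t) hj (show P (i - t + 1 + t) from by
        rw [show (i - t) + 1 + t = i + 1 from by omega]; exact hp)
      have e1 : (Fin.natAdd t ⟨i - t + 1, hj⟩ : Fin (t + u)) = ⟨i + 1, h⟩ := by
        ext; simp [Fin.natAdd]; omega
      have e2 : (Fin.natAdd t ⟨i - t, by omega⟩ : Fin (t + u)) = ⟨i, by omega⟩ := by
        ext; simp [Fin.natAdd]; omega
      have h3 : y (Fin.natAdd t ⟨i - t + 1, hj⟩) < y (Fin.natAdd t ⟨i - t, by omega⟩) := h2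
      rw [e1, e2] at h3; exact h3

lemma half_decomp (n t : ℕ) (P : ℕ → Prop) (ht1 : 1 ≤ t) (htn : t + 1 ≤ n) (hPt : P t)
    (y : Fin n → Fin b) :
    (DesLe n P y ∧ DesGe n (fun j => P j ∧ j ≠ t) y) ↔
      (DesEq n P y ∨ DesEq n (fun j => P j ∧ j ≠ t) y) := by
  constructor
  · rintro ⟨Hle, Hge⟩
    by_cases hdt : y ⟨t, by omega⟩ < y ⟨t - 1, by omega⟩
    · left
      intro i h
      constructor
      · exact Hle i h
      · intro hp
        by_cases hit : i + 1 = t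
        · have : y ⟨i + 1, h⟩ = y ⟨t, by omega⟩ := by
            congr 1; ext; simp [hit]
          have e2 : (⟨i, Nat.lt_of_succ_lt h⟩ : Fin n) = ⟨t - 1, by omega⟩ := by
            ext; simp; omega
          rw [this, e2]; exact hdt
        · exact Hge i h ⟨hp, hit⟩
    · right
      intro i h
      constructor
      · intro hd
        refine ⟨Hle i h hd, fun hit => ?_⟩
        have e1 : (⟨i + 1, h⟩ : Fin n) = ⟨t, by omega⟩ := by ext; simp [hit]
        have e2 : (⟨i, Nat.lt_of_succ_lt h⟩ : Fin n) = ⟨t - 1, by omega⟩ := by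
          ext; simp; omega
        rw [e1, e2] at hd; exact hdt hd
      · exact Hge i h
  · rintro (H | H)
    · refine ⟨(desEq_iff.1 H).1, ?_⟩
      rintro i h ⟨hp, _⟩
      exact (H i h).2 hp
    · refine ⟨?_, (desEq_iff.1 H).2⟩
      intro i h hd
      exact ((H i h).1 hd).1

lemma half_disjoint (n t : ℕ) (P : ℕ → Prop) (ht1 : 1 ≤ t) (htn : t + 1 ≤ n) (hPt : P t)
    (y : Fin n → Fin b) : DesEq n P y → DesEq n (fun j => P j ∧ j ≠ t) y → False := by
  intro H1 H2
  have h : t - 1 + 1 < n := by omega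
  have hd := (H1 (t - 1) h).2 (by rw [show t - 1 + 1 = t from by omega]; exact hPt)
  have := ((H2 (t - 1) h).1 hd).2
  omega

lemma hpoly_eq (m : ℕ) : hpoly b p m = wsum p m (fun f => Monotone f) := by
  classical
  rw [hpoly, wsum_def]
  exact Finset.sum_congr
    (Finset.filter_congr fun y _ =>
      ⟨fun h i j hij => h i j hij, fun h i j hij => h hij⟩)
    fun _ _ => rfl

lemma chain_mono (s : ℕ → ℕ) (K : ℕ) (hm : ∀ i ≤ K, s i < s (i + 1)) :
    ∀ i j, i < j → j ≤ K + 1 → s i < s j := by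
  intro i j hij hj
  induction j with
  | zero => omega
  | succ m ihm =>
    rcases Nat.lt_or_ge i m with h | h
    · exact lt_trans (ihm h (by omega)) (hm m (by omega))
    · have : i = m := by omega
      subst this; exact hm i (by omega)

lemma part1_gen (k : ℕ) : ∀ (n : ℕ) (s : ℕ → ℕ), s 0 = 0 → s (k + 1) = n →
    (∀ i ≤ k, s i < s (i + 1)) →
    wsum p n (DesLe n (fun j => ∃ i, 1 ≤ i ∧ i ≤ k ∧ s i = j))
      = ∏ i ∈ Finset.range (k + 1), hpoly b p (s (i + 1) - s i) := by
  induction k with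
  | zero =>
    intro n s h0 h1 hm
    have h2 : wsum p n (DesLe n fun j => ∃ i, 1 ≤ i ∧ i ≤ 0 ∧ s i = j)
        = wsum p n (fun y => Monotone y) := by
      apply wsum_congr
      intro y
      rw [desLe_congr (Q := fun _ => False)
        (fun j hj1 hj2 => ⟨fun ⟨i, hi1, hi2, _⟩ => by omega, False.elim⟩)]
      exact desLe_false y
    rw [h2, ← hpoly_eq, Finset.prod_range_one,
      show s (0 + 1) - s 0 = n from by omega]
  | succ k ih =>
    intro n s h0 h1 hm
    have hchain := chain_mono s (k + 1) hm
    have hle : ∀ i, 1 ≤ i → i ≤ k + 2 → s 1 ≤ s i := by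
      intro i hi1 hi2
      rcases Nat.eq_or_lt_of_le hi1 with h | h
      · rw [← h]
      · exact le_of_lt (hchain 1 i h hi2)
    have ht1 : 1 ≤ s 1 := by have := hchain 0 1 (by omega) (by omega); omega
    have htn : s 1 < n := by have := hchain 1 (k + 1 + 1) (by omega) (by omega); omega
    obtain ⟨u, rfl⟩ : ∃ u, n = s 1 + u := ⟨n - s 1, by omega⟩
    set P : ℕ → Prop := fun j => ∃ i, 1 ≤ i ∧ i ≤ k + 1 ∧ s i = j with hPdef
    have hPlow : ∀ j, 1 ≤ j → j < s 1 → ¬ P j := by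
      rintro j hj1 hj2 ⟨i, hi1, hi2, hie⟩
      have := hle i hi1 (by omega)
      omega
    have hPt : P (s 1) := ⟨1, le_refl 1, by omega, rfl⟩
    have e1 : wsum p (s 1 + u) (DesLe (s 1 + u) P)
        = wsum p (s 1) (fun w => Monotone w) * wsum p u (DesLe u (fun j => P (j + s 1))) := by
      rw [← wsum_split]
      apply wsum_congr
      intro y
      exact desLe_split (s 1) u P hPlow hPt y
    have e2 : wsum p u (DesLe u (fun j => P (j + s 1)))
        = wsum p u (DesLe u (fun j => ∃ i, 1 ≤ i ∧ i ≤ k ∧ (s (i + 1) - s 1) = j)) := by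
      apply wsum_congr; intro y
      apply desLe_congr
      intro j hj1 hju
      constructor
      · rintro ⟨i, hi1, hi2, hie⟩
        have hi1' : 2 ≤ i := by
          rcases Nat.eq_or_lt_of_le hi1 with h | h
          · exfalso; rw [← h] at hie; omega
          · omega
        refine ⟨i - 1, by omega, by omega, ?_⟩
        rw [show i - 1 + 1 = i from by omega]
        omega
      · rintro ⟨i, hi1, hi2, hie⟩
        refine ⟨i + 1, by omega, by omega, ?_⟩
        have := hle (i + 1) (by omega) (by omega)
        omega
    have hs' : ∀ i ≤ k, (fun i => s (i + 1) - s 1) i < (fun i => s (i + 1) - s 1) (i + 1) := by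
      intro i hi
      have h3 := hm (i + 1) (by omega)
      have := hle (i + 1) (by omega) (by omega)
      simp only
      omega
    rw [e1, e2, ← hpoly_eq,
      ih u (fun i => s (i + 1) - s 1) (Nat.sub_self _) (by (try simp only); omega) hs',
      Finset.prod_range_succ' (fun i => hpoly b p (s (i + 1) - s i)) (k + 1),
      show s (0 + 1) - s 0 = s 1 from by norm_num [h0], mul_comm]
    congr 1
    refine Finset.prod_congr rfl fun i hi => ?_
    rw [Finset.mem_range] at hi
    have := hle (i + 1) (by omega) (by omega)
    show hpoly b p (s (i + 1 + 1) - s 1 - (s (i + 1) - s 1)) = hpoly b p (s (i + 1 + 1) - s (i + 1))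
    congr 1
    omega

lemma hpoly_zero : hpoly b p 0 = 1 := by
  rw [hpoly]
  rw [Finset.filter_true_of_mem (fun f _ => fun i j _ => i.elim0)]
  simp

lemma part2_gen (k : ℕ) : ∀ (n : ℕ) (s : ℕ → ℕ), s 0 = 0 → s (k + 1) = n →
    (∀ i ≤ k, s i < s (i + 1)) →
    wsum p n (DesEq n (fun j => ∃ i, 1 ≤ i ∧ i ≤ k ∧ s i = j))
      = Matrix.det (Matrix.of fun i j : Fin (k + 1) =>
          if s i.val ≤ s (j.val + 1) then hpoly b p (s (j.val + 1) - s i.val) else 0) := by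
  induction k with
  | zero =>
    intro n s h0 h1 hm
    have h2 : wsum p n (DesEq n fun j => ∃ i, 1 ≤ i ∧ i ≤ 0 ∧ s i = j)
        = wsum p n (fun y => Monotone y) := by
      apply wsum_congr
      intro y
      rw [desEq_congr (Q := fun _ => False)
        (fun j hj1 hj2 => ⟨fun ⟨i, hi1, hi2, _⟩ => by omega, False.elim⟩)]
      rw [desEq_iff]
      constructor
      · rintro ⟨H1, _⟩; exact (desLe_false y).1 H1
      · intro hmono; exact ⟨(desLe_false y).2 hmono, desGe_false y⟩
    rw [h2, ← hpoly_eq, Matrix.det_fin_one]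
    simp [Matrix.of_apply, h0, h1]
  | succ k ih =>
    intro n s h0 h1 hm
    have hchain := chain_mono s (k + 1) hm
    have hle : ∀ i, 1 ≤ i → i ≤ k + 2 → s 1 ≤ s i := by
      intro i hi1 hi2
      rcases Nat.eq_or_lt_of_le hi1 with h | h
      · rw [← h]
      · exact le_of_lt (hchain 1 i h hi2)
    have ht1 : 1 ≤ s 1 := by have := hchain 0 1 (by omega) (by omega); omega
    have htn : s 1 < n := by have := hchain 1 (k + 1 + 1) (by omega) (by omega); omega
    obtain ⟨u, rfl⟩ : ∃ u, n = s 1 + u := ⟨n - s 1, by omega⟩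
    set P : ℕ → Prop := fun j => ∃ i, 1 ≤ i ∧ i ≤ k + 1 ∧ s i = j with hPdef
    have hPlow : ∀ j, 1 ≤ j → j < s 1 → ¬ P j := by
      rintro j hj1 hj2 ⟨i, hi1, hi2, hie⟩
      have := hle i hi1 (by omega)
      omega
    have hPt : P (s 1) := ⟨1, le_refl 1, by omega, rfl⟩
    set sp : ℕ → ℕ := fun i => s (i + 1) - s 1 with hsp
    set sd : ℕ → ℕ := fun i => if i = 0 then 0 else s (i + 1) with hsd
    -- combinatorial recursion
    have hLR : wsum p (s 1 + u) (DesEq (s 1 + u) P) =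
        hpoly b p (s 1) * wsum p u (DesEq u (fun j => P (j + s 1)))
          - wsum p (s 1 + u) (DesEq (s 1 + u) (fun j => P j ∧ j ≠ s 1)) := by
      have hhalf : wsum p (s 1 + u)
            (fun y => DesLe (s 1 + u) P y ∧ DesGe (s 1 + u) (fun j => P j ∧ j ≠ s 1) y)
          = hpoly b p (s 1) * wsum p u (DesEq u (fun j => P (j + s 1))) := by
        rw [hpoly_eq, ← wsum_split]
        exact wsum_congr p fun y => desHalf_split (s 1) u P hPlow hPt y
      have hsum : wsum p (s 1 + u)
            (fun y => DesLe (s 1 + u) P y ∧ DesGe (s 1 + u) (fun j => P j ∧ j ≠ s 1) y)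
          = wsum p (s 1 + u) (DesEq (s 1 + u) P)
            + wsum p (s 1 + u) (DesEq (s 1 + u) (fun j => P j ∧ j ≠ s 1)) := by
        rw [← wsum_or p (half_disjoint (s 1 + u) (s 1) P ht1 (by omega) hPt)]
        exact wsum_congr p fun y => half_decomp (s 1 + u) (s 1) P ht1 (by omega) hPt y
      rw [← hhalf, hsum]; ring
    -- first minor via IH
    have hsp0 : sp 0 = 0 := by show s (0 + 1) - s 1 = 0; norm_num
    have hspn : sp (k + 1) = u := by show s (k + 1 + 1) - s 1 = u; omega
    have hspm : ∀ i ≤ k, sp i < sp (i + 1) := by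
      intro i hi
      have h3 := hm (i + 1) (by omega)
      have := hle (i + 1) (by omega) (by omega)
      show s (i + 1) - s 1 < s (i + 1 + 1) - s 1
      omega
    have ihA : wsum p u (DesEq u (fun j => P (j + s 1)))
        = Matrix.det (Matrix.of fun i j : Fin (k + 1) =>
            if sp i.val ≤ sp (j.val + 1) then hpoly b p (sp (j.val + 1) - sp i.val) else 0) := by
      rw [← ih u sp hsp0 hspn hspm]
      apply wsum_congr
      intro y
      apply desEq_congr
      intro j hj1 hju
      constructor
      · rintro ⟨i, hi1, hi2, hie⟩
        have hi1' : 2 ≤ i := by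
          rcases Nat.eq_or_lt_of_le hi1 with h | h
          · exfalso; rw [← h] at hie; omega
          · omega
        refine ⟨i - 1, by omega, by omega, ?_⟩
        show s (i - 1 + 1) - s 1 = j
        rw [show i - 1 + 1 = i from by omega]
        omega
      · rintro ⟨i, hi1, hi2, hie⟩
        refine ⟨i + 1, by omega, by omega, ?_⟩
        have hie' : s (i + 1) - s 1 = j := hie
        have := hle (i + 1) (by omega) (by omega)
        omega
    -- second term via IH
    have hsd0 : sd 0 = 0 := rfl
    have hsdn : sd (k + 1) = s 1 + u := by
      show (if k + 1 = 0 then 0 else s (k + 1 + 1)) = s 1 + u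
      rw [if_neg (by omega : ¬ k + 1 = 0)]; exact h1
    have hsdm : ∀ i ≤ k, sd i < sd (i + 1) := by
      intro i hi
      have h2 : sd (i + 1) = s (i + 1 + 1) := by
        show (if i + 1 = 0 then 0 else s (i + 1 + 1)) = _
        rw [if_neg (Nat.succ_ne_zero i)]
      rw [h2]
      rcases Nat.eq_zero_or_pos i with h | h
      · subst h
        rw [hsd0]
        have := hchain 0 (0 + 1 + 1) (by omega) (by omega)
        omega
      · have h3 : sd i = s (i + 1) := by
          show (if i = 0 then 0 else s (i + 1)) = _
          rw [if_neg (by omega : ¬ i = 0)]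
        rw [h3]
        exact hm (i + 1) (by omega)
    have ihB : wsum p (s 1 + u) (DesEq (s 1 + u) (fun j => P j ∧ j ≠ s 1))
        = Matrix.det (Matrix.of fun i j : Fin (k + 1) =>
            if sd i.val ≤ sd (j.val + 1) then hpoly b p (sd (j.val + 1) - sd i.val) else 0) := by
      rw [← ih (s 1 + u) sd hsd0 hsdn hsdm]
      apply wsum_congr
      intro y
      apply desEq_congr
      intro j hj1 hju
      constructor
      · rintro ⟨⟨i, hi1, hi2, hie⟩, hne⟩
        have hi1' : 2 ≤ i := by
          rcases Nat.eq_or_lt_of_le hi1 with h | h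
          · exfalso; rw [← h] at hie; exact hne hie.symm
          · omega
        refine ⟨i - 1, by omega, by omega, ?_⟩
        show (if i - 1 = 0 then 0 else s (i - 1 + 1)) = j
        rw [if_neg (by omega), show i - 1 + 1 = i from by omega]
        exact hie
      · rintro ⟨i, hi1, hi2, hie⟩
        have hie0 : (if i = 0 then 0 else s (i + 1)) = j := hie
        rw [if_neg (by omega)] at hie0
        have hlt := hchain 1 (i + 1) (by omega) (by omega)
        exact ⟨⟨i + 1, by omega, by omega, hie0⟩, by omega⟩
    -- determinant recursion
    set M : Matrix (Fin (k + 1 + 1)) (Fin (k + 1 + 1)) ℝ :=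
      Matrix.of fun i j : Fin (k + 1 + 1) =>
        if s i.val ≤ s (j.val + 1) then hpoly b p (s (j.val + 1) - s i.val) else 0 with hM
    have hA00 : M 0 0 = hpoly b p (s 1) := by
      rw [hM]
      simp [Matrix.of_apply, h0]
    have hA10 : M (Fin.succ 0) 0 = 1 := by
      rw [hM]
      simp [Matrix.of_apply, hpoly_zero]
    have hzero : ∀ m : Fin k, M (Fin.succ (Fin.succ m)) 0 = 0 := by
      intro m
      rw [hM]
      simp only [Matrix.of_apply, Fin.val_succ, Fin.val_zero]
      apply if_neg
      have := hchain 1 (m.val + 1 + 1) (by omega) (by omega)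
      simp only [Nat.zero_add]
      omega
    have minor0 : M.submatrix (Fin.succAbove 0) Fin.succ
        = Matrix.of (fun i j : Fin (k + 1) =>
            if sp i.val ≤ sp (j.val + 1) then hpoly b p (sp (j.val + 1) - sp i.val) else 0) := by
      ext i j
      simp only [Matrix.submatrix_apply, Matrix.of_apply, Fin.succAbove_zero, Fin.val_succ, hM]
      have hi := hle (i.val + 1) (by omega) (by omega)
      have hj := hle (j.val + 1 + 1) (by omega) (by omega)
      simp only [hsp]
      by_cases hc : s (i.val + 1) ≤ s (j.val + 1 + 1)
      · rw [if_pos hc, if_pos (show s (i.val + 1) - s 1 ≤ s (j.val + 1 + 1) - s 1 by omega)]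
        congr 1
        omega
      · rw [if_neg hc, if_neg (show ¬ s (i.val + 1) - s 1 ≤ s (j.val + 1 + 1) - s 1 by omega)]
    have hrowval : ∀ i : Fin (k + 1),
        s (((Fin.succ (0 : Fin (k + 1))).succAbove i).val) = sd i.val := by
      intro i
      rcases Nat.eq_zero_or_pos i.val with h | h
      · have hi0 : i = 0 := by ext; exact h
        subst hi0
        rw [Fin.succAbove_of_castSucc_lt _ _ (by simp [Fin.lt_def])]
        simp [hsd, h0]
      · rw [Fin.succAbove_of_le_castSucc _ _ (by simp [Fin.le_def]; omega)]
        simp only [hsd, Fin.val_succ]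
        rw [if_neg (by omega : ¬ i.val = 0)]
    have minor1 : M.submatrix (Fin.succAbove (Fin.succ 0)) Fin.succ
        = Matrix.of (fun i j : Fin (k + 1) =>
            if sd i.val ≤ sd (j.val + 1) then hpoly b p (sd (j.val + 1) - sd i.val) else 0) := by
      ext i j
      simp only [Matrix.submatrix_apply, Matrix.of_apply, Fin.val_succ, hM]
      rw [hrowval i]
      rw [show s (j.val + 1 + 1) = sd (j.val + 1) from by
        simp only [hsd]; rw [if_neg (by omega : ¬ j.val + 1 = 0)]]
    have hdet : M.det
        = hpoly b p (s 1) * Matrix.det (Matrix.of fun i j : Fin (k + 1) =>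
            if sp i.val ≤ sp (j.val + 1) then hpoly b p (sp (j.val + 1) - sp i.val) else 0)
          - Matrix.det (Matrix.of fun i j : Fin (k + 1) =>
            if sd i.val ≤ sd (j.val + 1) then hpoly b p (sd (j.val + 1) - sd i.val) else 0) := by
      rw [Matrix.det_succ_column_zero]
      rw [Fin.sum_univ_succ, Fin.sum_univ_succ]
      rw [hA00, hA10, minor0, minor1]
      rw [Finset.sum_eq_zero (fun m _ => by rw [hzero m]; ring)]
      simp [Fin.val_succ]
      ring
    rw [hLR, ihA, ihB]
    exact hdet.symm

lemma image_rev_univ (m : ℕ) : ((Finset.univ : Finset (Fin m)).image Fin.rev) = Finset.univ :=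
  Finset.image_univ_equiv (Equiv.ofBijective _ Fin.rev_bijective)

lemma image_comp_rev (m : ℕ) (w : Fin m → Fin b) :
    Finset.image (fun j => w (Fin.rev j)) Finset.univ = Finset.image w Finset.univ := by
  ext x
  simp only [Finset.mem_image, Finset.mem_univ, true_and]
  constructor
  · rintro ⟨j, hj⟩; exact ⟨Fin.rev j, hj⟩
  · rintro ⟨j, hj⟩; exact ⟨Fin.rev j, by rw [Fin.rev_rev]; exact hj⟩

lemma wsum_anti (m : ℕ) : wsum p m (fun w => StrictAnti w) = epoly b p m := by
  classical
  rw [wsum_def, epoly]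
  refine Finset.sum_bij (fun w _ => Finset.image w Finset.univ) ?_ ?_ ?_ ?_
  · intro w hw
    have hanti : StrictAnti w := (Finset.mem_filter.1 hw).2
    rw [Finset.mem_powersetCard]
    refine ⟨Finset.subset_univ _, ?_⟩
    rw [Finset.card_image_of_injective _ hanti.injective, Finset.card_univ, Fintype.card_fin]
  · intro w1 hw1 w2 hw2 heq
    replace heq : Finset.image w1 Finset.univ = Finset.image w2 Finset.univ := heq
    have h1 : StrictAnti w1 := (Finset.mem_filter.1 hw1).2
    have h2 : StrictAnti w2 := (Finset.mem_filter.1 hw2).2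
    have hm1 : StrictMono (fun j => w1 (Fin.rev j)) := by
      intro x y hxy
      exact h1 (Fin.rev_lt_rev.2 hxy)
    have hm2 : StrictMono (fun j => w2 (Fin.rev j)) := by
      intro x y hxy
      exact h2 (Fin.rev_lt_rev.2 hxy)
    have hcard : (Finset.image w1 Finset.univ).card = m := by
      rw [Finset.card_image_of_injective _ h1.injective, Finset.card_univ, Fintype.card_fin]
    have hmem1 : ∀ x : Fin m, (fun j => w1 (Fin.rev j)) x ∈ Finset.image w1 Finset.univ := by
      intro x; exact Finset.mem_image_of_mem _ (Finset.mem_univ _)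
    have hmem2 : ∀ x : Fin m, (fun j => w2 (Fin.rev j)) x ∈ Finset.image w1 Finset.univ := by
      intro x; rw [heq]; exact Finset.mem_image_of_mem _ (Finset.mem_univ _)
    have e1 := Finset.orderEmbOfFin_unique hcard hmem1 hm1
    have e2 := Finset.orderEmbOfFin_unique hcard hmem2 hm2
    funext i
    have := congrFun (e1.trans e2.symm) (Fin.rev i)
    simpa [Fin.rev_rev] using this
  · intro T hT
    rw [Finset.mem_powersetCard] at hT
    obtain ⟨-, hcard⟩ := hT
    refine ⟨fun j => T.orderEmbOfFin hcard (Fin.rev j), ?_, ?_⟩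
    · rw [Finset.mem_filter]
      refine ⟨Finset.mem_univ _, ?_⟩
      intro x y hxy
      exact (T.orderEmbOfFin hcard).strictMono (Fin.rev_lt_rev.2 hxy)
    · show Finset.image (fun j => T.orderEmbOfFin hcard (Fin.rev j)) Finset.univ = T
      rw [image_comp_rev]
      apply Finset.eq_of_subset_of_card_le
      · intro x hx
        obtain ⟨j, -, rfl⟩ := Finset.mem_image.1 hx
        exact Finset.orderEmbOfFin_mem T hcard j
      · rw [Finset.card_image_of_injective _ (T.orderEmbOfFin hcard).injective,
          Finset.card_univ, Fintype.card_fin, hcard]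
  · intro w hw
    have hanti : StrictAnti w := (Finset.mem_filter.1 hw).2
    exact (Finset.prod_image (fun x _ y _ h => hanti.injective h)).symm

end DTA

/-- For i.i.d. `Y_1, …, Y_n` with `P(Y = j) = p_j`:  the probability that the descent set is
contained in `S = {s 1 < … < s k}` equals `h_{s_1} h_{s_2 - s_1} ⋯ h_{n - s_k}`; the
probability that it equals `S` is `det(h_{s_{j+1} - s_i})_{i,j=0}^k` (with `h_m = 0` for
`m < 0`, the `if`-clause); and `P(Y_1 > ⋯ > Y_{i+1}) = e_{i+1}(p_0, …, p_{b-1})`. -/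
theorem descents_independent_trials (b n k : ℕ) (p : Fin b → ℝ)
    (hp : ∀ i, 0 ≤ p i) (hp1 : ∑ i, p i = 1)
    (S : Finset ℕ) (s : ℕ → ℕ)
    (hs0 : s 0 = 0) (hsn : s (k + 1) = n)
    (hmono : ∀ i ≤ k, s i < s (i + 1))
    (hS : S = (Finset.Icc 1 k).image s) :
    (∑ y ∈ Finset.univ.filter (fun y : Fin n → Fin b =>
        ∀ i : Fin (n - 1), y ⟨i.val + 1, by have := i.isLt; omega⟩
            < y ⟨i.val, by have := i.isLt; omega⟩ → i.val + 1 ∈ S), ∏ i, p (y i))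
      = ∏ i ∈ Finset.range (k + 1), hpoly b p (s (i + 1) - s i) ∧
    (∑ y ∈ Finset.univ.filter (fun y : Fin n → Fin b =>
        ∀ i : Fin (n - 1), (y ⟨i.val + 1, by have := i.isLt; omega⟩
            < y ⟨i.val, by have := i.isLt; omega⟩ ↔ i.val + 1 ∈ S)), ∏ i, p (y i))
      = Matrix.det (Matrix.of fun i j : Fin (k + 1) =>
          if s i.val ≤ s (j.val + 1) then hpoly b p (s (j.val + 1) - s i.val) else 0) ∧
    (∀ i : ℕ, ∀ hi : i + 1 ≤ n,
      (∑ y ∈ Finset.univ.filter (fun y : Fin n → Fin b =>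
          ∀ m : Fin i, y ⟨m.val + 1, by have := m.isLt; omega⟩
              < y ⟨m.val, by have := m.isLt; omega⟩), ∏ j, p (y j))
        = epoly b p (i + 1)) := by
  have hmem : ∀ j, (j ∈ S ↔ ∃ i', 1 ≤ i' ∧ i' ≤ k ∧ s i' = j) := by
    intro j
    rw [hS]
    simp only [Finset.mem_image, Finset.mem_Icc]
    constructor
    · rintro ⟨a, ⟨ha1, ha2⟩, ha3⟩; exact ⟨a, ha1, ha2, ha3⟩
    · rintro ⟨a, ha1, ha2, ha3⟩; exact ⟨a, ⟨ha1, ha2⟩, ha3⟩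
  refine ⟨?_, ?_, ?_⟩
  · -- Part 1
    have h1 := DTA.part1_gen p k n s hs0 hsn hmono
    have hiff : ∀ y : Fin n → Fin b,
        DTA.DesLe n (fun j => ∃ i, 1 ≤ i ∧ i ≤ k ∧ s i = j) y ↔
          (∀ i : Fin (n - 1), y ⟨i.val + 1, by have := i.isLt; omega⟩
            < y ⟨i.val, by have := i.isLt; omega⟩ → i.val + 1 ∈ S) := by
      intro y
      constructor
      · intro H i hdes
        exact (hmem (i.val + 1)).2 (H i.val (by have := i.isLt; omega) hdes)
      · intro H i hlt hdes
        exact (hmem (i + 1)).1 (H ⟨i, by omega⟩ hdes)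
    have hconv := (DTA.wsum_congr p hiff).trans (DTA.wsum_def p n _)
    exact hconv.symm.trans h1
  · -- Part 2
    have h2 := DTA.part2_gen p k n s hs0 hsn hmono
    have hiff : ∀ y : Fin n → Fin b,
        DTA.DesEq n (fun j => ∃ i, 1 ≤ i ∧ i ≤ k ∧ s i = j) y ↔
          (∀ i : Fin (n - 1), (y ⟨i.val + 1, by have := i.isLt; omega⟩
            < y ⟨i.val, by have := i.isLt; omega⟩ ↔ i.val + 1 ∈ S)) := by
      intro y
      constructor
      · intro H i
        exact (H i.val (by have := i.isLt; omega)).trans ((hmem (i.val + 1)).symm)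
      · intro H i hlt
        exact (H ⟨i, by omega⟩).trans (hmem (i + 1))
    have hconv := (DTA.wsum_congr p hiff).trans (DTA.wsum_def p n _)
    exact hconv.symm.trans h2
  · -- Part 3
    intro i0 hi0
    obtain ⟨u, hu⟩ : ∃ u, n = i0 + 1 + u := ⟨n - (i0 + 1), by omega⟩
    subst hu
    have hsplit := DTA.wsum_split p (i0 + 1) u (fun w => StrictAnti w) (fun _ => True)
    rw [DTA.wsum_anti, DTA.wsum_true p hp1, mul_one] at hsplit
    have hiff : ∀ y : Fin (i0 + 1 + u) → Fin b,
        (StrictAnti (fun q : Fin (i0 + 1) => y (Fin.castAdd u q)) ∧ True) ↔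
          (∀ m : Fin i0, y ⟨m.val + 1, by have := m.isLt; omega⟩
            < y ⟨m.val, by have := m.isLt; omega⟩) := by
      intro y
      constructor
      · rintro ⟨H, -⟩ m
        exact H (show (⟨m.val, by omega⟩ : Fin (i0 + 1)) < ⟨m.val + 1, by omega⟩ from
          Fin.mk_lt_mk.2 (by omega))
      · intro H
        refine ⟨?_, trivial⟩
        rw [DTA.strictAnti_iff_adj]
        intro m h
        exact H ⟨m, by omega⟩
    have hconv := (DTA.wsum_congr p hiff).trans (DTA.wsum_def p (i0 + 1 + u) _)
    exact (hconv.symm.trans ((DTA.wsum_congr p (fun y =>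
      Iff.rfl)).trans hsplit))
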